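/- Let G be a countable discrete group acting by measure-preserving transformations on a standard Borel probability space (X, μ), and assume the action is ergodic, i.e., every measurable A ⊆ X with μ(g·A △ A) = 0 for all g ∈ G satisfies μ(A) ∈ {0, 1}. Let (D_n) be a sequence of measurable subsets of X such that μ(g·D_n △ D_n) → 0 for every g ∈ G and such that there exists c > 0 with μ(D_n) ≥ c for all n. Then μ(⋃_n D_n) = 1. -/

import Mathlib

open Filter Topology MeasureTheory Pointwise
open scoped symmDiff ENNReal

/-- Let `G` be a countable group acting ergodically by measure-preserving transformations on
a standard Borel probability space `(X, μ)`.  If `(D n)` is an asymptotically invariant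
sequence of measurable subsets whose measures are uniformly positive, then `⋃ n, D n` has
full measure. -/
theorem iUnion_asymptotically_invariant_full
    {G : Type*} [Group G] [Countable G]
    {X : Type*} [MeasurableSpace X] [StandardBorelSpace X]
    (μ : Measure X) [IsProbabilityMeasure μ] [MulAction G X]
    (hmp : ∀ g : G, MeasurePreserving (fun x : X => g • x) μ μ)
    (herg : ∀ A : Set X, MeasurableSet A →
      (∀ g : G, μ ((g • A) ∆ A) = 0) → μ A = 0 ∨ μ A = 1)
    (D : ℕ → Set X) (hD : ∀ n, MeasurableSet (D n))
    (hai : ∀ g : G, Tendsto (fun n => (μ ((g • D n) ∆ D n)).toReal) atTop (𝓝 0))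
    (c : ℝ) (hc : 0 < c) (hpos : ∀ n, ENNReal.ofReal c ≤ μ (D n)) :
    μ (⋃ n, D n) = 1 := by
  -- basic facts about the action
  have hsmul_eq : ∀ (g : G) (S : Set X), g • S = (fun x : X => g⁻¹ • x) ⁻¹' S := by
    intro g S
    ext x
    simp [Set.mem_smul_set_iff_inv_smul_mem]
  have hmeas_smul : ∀ (g : G) (S : Set X), MeasurableSet S → MeasurableSet (g • S) := by
    intro g S hS
    rw [hsmul_eq]
    exact (hmp g⁻¹).measurable hS
  have hμ_smul : ∀ (g : G) (S : Set X), MeasurableSet S → μ (g • S) = μ S := by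
    intro g S hS
    rw [hsmul_eq]
    exact (hmp g⁻¹).measure_preimage hS.nullMeasurableSet
  -- enumerate the group
  obtain ⟨e, he⟩ := exists_surjective_nat G
  -- select a subsequence with summable symmetric differences
  have hsel : ∀ k : ℕ, ∃ N : ℕ, ∀ i ≤ k,
      μ ((e i • D N) ∆ D N) ≤ ENNReal.ofReal ((1/2 : ℝ) ^ k) := by
    intro k
    have h1 : ∀ i : ℕ, ∀ᶠ m in atTop,
        μ ((e i • D m) ∆ D m) ≤ ENNReal.ofReal ((1/2 : ℝ) ^ k) := by
      intro i
      have hpos' : (0:ℝ) < (1/2) ^ k := by positivity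
      filter_upwards [(hai (e i)).eventually (eventually_le_nhds hpos')] with m hm
      rw [← ENNReal.ofReal_toReal (measure_ne_top μ _)]
      exact ENNReal.ofReal_le_ofReal hm
    have h2 : ∀ᶠ m in atTop, ∀ i ∈ Finset.range (k+1),
        μ ((e i • D m) ∆ D m) ≤ ENNReal.ofReal ((1/2 : ℝ) ^ k) :=
      (eventually_all_finset _).2 fun i _ => h1 i
    obtain ⟨N, hN⟩ := h2.exists
    exact ⟨N, fun i hi => hN i (Finset.mem_range.2 (Nat.lt_succ_of_le hi))⟩
  choose n hn using hsel
  set C : ℕ → Set X := fun k => D (n k) with hC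
  have hC_meas : ∀ k, MeasurableSet (C k) := fun k => hD (n k)
  have key : ∀ k, ∀ i ≤ k, μ ((e i • C k) ∆ C k) ≤ ENNReal.ofReal ((1/2 : ℝ) ^ k) :=
    fun k i hi => hn k i hi
  set B : ℕ → Set X := fun m => ⋃ k, C (m + k) with hB
  have hB_meas : ∀ m, MeasurableSet (B m) := fun m => MeasurableSet.iUnion fun k => hC_meas _
  have hB_anti : Antitone B := by
    intro m m' hmm'
    refine Set.iUnion_subset fun k => ?_
    have : m' + k = m + ((m' - m) + k) := by omega
    rw [this]
    exact Set.subset_iUnion (fun j => C (m + j)) ((m' - m) + k)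
  set A : Set X := ⋂ m, B m with hA
  have hA_meas : MeasurableSet A := MeasurableSet.iInter hB_meas
  have hAB : ∀ m, A ⊆ B m := fun m => Set.iInter_subset B m
  -- measure of B m is at least c
  have hBc : ∀ m, ENNReal.ofReal c ≤ μ (B m) := by
    intro m
    refine le_trans (hpos (n m)) (measure_mono ?_)
    have : C m = C (m + 0) := by rw [Nat.add_zero]
    rw [show (D (n m)) = C m from rfl, this]
    exact Set.subset_iUnion (fun k => C (m + k)) 0
  -- continuity from above
  have htendB : Tendsto (μ ∘ B) atTop (𝓝 (μ A)) :=
    tendsto_measure_iInter_atTop (fun m => (hB_meas m).nullMeasurableSet) hB_anti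
      ⟨0, measure_ne_top μ _⟩
  have hAc : ENNReal.ofReal c ≤ μ A := ge_of_tendsto htendB (Eventually.of_forall hBc)
  -- μ (B m \ A) → 0
  have hBA_inter : ⋂ m, (B m \ A) = ∅ := by
    refine Set.eq_empty_iff_forall_notMem.2 fun x hx => ?_
    rw [Set.mem_iInter] at hx
    exact (hx 0).2 (Set.mem_iInter.2 fun m => (hx m).1)
  have htendBA : Tendsto (fun m => μ (B m \ A)) atTop (𝓝 0) := by
    have := tendsto_measure_iInter_atTop
      (s := fun m => B m \ A)
      (fun m => ((hB_meas m).diff hA_meas).nullMeasurableSet)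
      (fun m m' h => Set.diff_subset_diff_left (hB_anti h))
      ⟨0, measure_ne_top μ _⟩
    rwa [hBA_inter, measure_empty] at this
  -- symmetric difference of unions
  have hsub : ∀ (s t : ℕ → Set X), ((⋃ k, s k) ∆ (⋃ k, t k)) ⊆ ⋃ k, (s k ∆ t k) := by
    intro s t x hx
    rw [Set.mem_symmDiff] at hx
    simp only [Set.mem_iUnion, not_exists] at hx ⊢
    rcases hx with ⟨⟨k, hk⟩, hnx⟩ | ⟨⟨k, hk⟩, hnx⟩
    · exact ⟨k, Set.mem_symmDiff.2 (Or.inl ⟨hk, hnx k⟩)⟩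
    · exact ⟨k, Set.mem_symmDiff.2 (Or.inr ⟨hk, hnx k⟩)⟩
  -- ofReal of powers of 1/2
  have hofReal_pow : ∀ j : ℕ, ENNReal.ofReal ((1/2 : ℝ) ^ j) = (2⁻¹ : ℝ≥0∞) ^ j := by
    intro j
    rw [ENNReal.ofReal_pow (by norm_num)]
    congr 1
    rw [ENNReal.ofReal_div_of_pos (by norm_num), ENNReal.ofReal_one, ENNReal.ofReal_ofNat,
      one_div]
  -- A is almost invariant
  have hinv : ∀ g : G, μ ((g • A) ∆ A) = 0 := by
    intro g
    obtain ⟨i, rfl⟩ := he g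
    have hbound : ∀ m, i ≤ m →
        μ ((e i • A) ∆ A) ≤ μ (B m \ A) + ((2⁻¹ : ℝ≥0∞) ^ m * 2 + μ (B m \ A)) := by
      intro m him
      have h1 : μ ((e i • A) ∆ A) ≤ μ ((e i • A) ∆ (e i • B m)) + μ ((e i • B m) ∆ A) :=
        measure_symmDiff_le _ _ _
      have h2 : μ ((e i • B m) ∆ A) ≤ μ ((e i • B m) ∆ B m) + μ (B m ∆ A) :=
        measure_symmDiff_le _ _ _
      have hABm : A ∆ B m = B m \ A := symmDiff_of_le (hAB m)
      have hBmA : B m ∆ A = B m \ A := by rw [symmDiff_comm]; exact hABm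
      have h3 : μ ((e i • A) ∆ (e i • B m)) = μ (B m \ A) := by
        rw [← Set.smul_set_symmDiff, hμ_smul _ _ (hA_meas.symmDiff (hB_meas m)), hABm]
      have h4 : μ ((e i • B m) ∆ B m) ≤ (2⁻¹ : ℝ≥0∞) ^ m * 2 := by
        have hsm : e i • B m = ⋃ k, e i • C (m + k) := by
          rw [hB]
          exact Set.smul_set_iUnion _ _
        have hss : ((e i • B m) ∆ B m) ⊆ ⋃ k, ((e i • C (m + k)) ∆ C (m + k)) := by
          rw [hsm]
          exact hsub _ _
        calc μ ((e i • B m) ∆ B m) ≤ ∑' k, μ ((e i • C (m + k)) ∆ C (m + k)) :=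
              (measure_mono hss).trans (measure_iUnion_le _)
          _ ≤ ∑' k, (2⁻¹ : ℝ≥0∞) ^ (m + k) := by
              refine ENNReal.tsum_le_tsum fun k => ?_
              rw [← hofReal_pow]
              exact key (m + k) i (le_trans him (Nat.le_add_right m k))
          _ = (2⁻¹ : ℝ≥0∞) ^ m * 2 := by
              simp only [pow_add]
              rw [ENNReal.tsum_mul_left, ENNReal.tsum_geometric, ENNReal.one_sub_inv_two, inv_inv]
      calc μ ((e i • A) ∆ A) ≤ μ ((e i • A) ∆ (e i • B m)) + μ ((e i • B m) ∆ A) := h1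
        _ ≤ μ (B m \ A) + (μ ((e i • B m) ∆ B m) + μ (B m ∆ A)) := by
            rw [h3]; exact add_le_add_right h2 _
        _ ≤ μ (B m \ A) + ((2⁻¹ : ℝ≥0∞) ^ m * 2 + μ (B m \ A)) := by
            rw [hBmA]; exact add_le_add_right (add_le_add_left h4 _) _
    have htend : Tendsto (fun m => μ (B m \ A) + ((2⁻¹ : ℝ≥0∞) ^ m * 2 + μ (B m \ A)))
        atTop (𝓝 0) := by
      have hpow : Tendsto (fun m => (2⁻¹ : ℝ≥0∞) ^ m * 2) atTop (𝓝 0) := by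
        have := ENNReal.tendsto_pow_atTop_nhds_zero_of_lt_one
          (by norm_num : (2⁻¹ : ℝ≥0∞) < 1)
        simpa using ENNReal.Tendsto.mul_const this (Or.inr ENNReal.ofNat_ne_top)
      have := htendBA.add (hpow.add htendBA)
      simpa using this
    have : μ ((e i • A) ∆ A) ≤ 0 :=
      ge_of_tendsto htend (eventually_atTop.2 ⟨i, fun m hm => hbound m hm⟩)
    exact le_antisymm this zero_le
  -- conclude by ergodicity
  rcases herg A hA_meas hinv with h0 | h1
  · exact absurd (h0 ▸ hAc) (by simpa using (ENNReal.ofReal_pos.2 hc).not_ge)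
  · refine le_antisymm prob_le_one ?_
    rw [← h1]
    refine measure_mono ?_
    refine (hAB 0).trans (Set.iUnion_subset fun k => ?_)
    exact Set.subset_iUnion D (n (0 + k))
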